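/- Let M, N ≥ 1 and let real numbers V_{n,m} > 0 (1 ≤ n ≤ N, 1 ≤ m ≤ M) satisfy ∏_{m=1}^M V_{n,m} = β for every n, and let α ∈ ℝ with α > β > 0. Let X_α := (V_N + S_α) ⋯ (V_2 + S_α)(V_1 + S_α) with V_n := diag(V_{n,1}, …, V_{n,M}). Then X_α is invertible and the matrix (−1)^N P X_α^{−1} P has all entries strictly positive. -/

import Mathlib

/-- The constant real `M × M` matrix `S_α`, obtained from `S` by substituting
`y = (−1)^M α`: `(i,j)`-entry `1` if `j = i+1`, `(−1)^M α` if `(i,j) = (M,1)`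
(in 1-based indexing), `0` otherwise. -/
noncomputable def SmatR (M : ℕ) (α : ℝ) : Matrix (Fin M) (Fin M) ℝ :=
  Matrix.of fun i j =>
    if (j : ℕ) = (i : ℕ) + 1 then 1
    else if (i : ℕ) = M - 1 ∧ (j : ℕ) = 0 then (-1 : ℝ) ^ M * α else 0

noncomputable def pprod (M : ℕ) (d : Fin M → ℝ) (i : ℕ) : ℝ :=
  ∏ k ∈ Finset.range i, if h : k < M then d ⟨k, h⟩ else 1

noncomputable def Bmat (M : ℕ) (α β : ℝ) (d : Fin M → ℝ) : Matrix (Fin M) (Fin M) ℝ :=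
  Matrix.of fun i j =>
    (-1 : ℝ) ^ ((i : ℕ) + (j : ℕ) + 1) * (pprod M d i / pprod M d ((j : ℕ) + 1)) *
      (β / (α - β) + if (j : ℕ) < (i : ℕ) then 1 else 0)

lemma pprod_pos (M : ℕ) (d : Fin M → ℝ) (hd : ∀ m, 0 < d m) (i : ℕ) :
    0 < pprod M d i := by
  apply Finset.prod_pos
  intro k _
  split
  · exact hd _
  · exact one_pos

lemma pprod_succ (M : ℕ) (d : Fin M → ℝ) (i : ℕ) (h : i < M) :
    pprod M d (i + 1) = pprod M d i * d ⟨i, h⟩ := by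
  rw [pprod, Finset.prod_range_succ, dif_pos h, pprod]

lemma pprod_M (M : ℕ) (d : Fin M → ℝ) : pprod M d M = ∏ m, d m := by
  rw [pprod, ← Fin.prod_univ_eq_prod_range (fun k => if h : k < M then d ⟨k, h⟩ else 1)]
  apply Finset.prod_congr rfl
  intro k _
  rw [dif_pos k.isLt]

lemma AB_eq_one (M : ℕ) (hM : 1 ≤ M) (α β : ℝ) (hβ : 0 < β) (hαβ : β < α)
    (d : Fin M → ℝ) (hd : ∀ m, 0 < d m) (hprod : ∏ m, d m = β) :
    (Matrix.diagonal d + SmatR M α) * Bmat M α β d = 1 := by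
  have hαβ' : α - β ≠ 0 := by linarith
  have hβ' : β ≠ 0 := ne_of_gt hβ
  have hp : ∀ i, pprod M d i ≠ 0 := fun i => ne_of_gt (pprod_pos M d hd i)
  have hpM : pprod M d M = β := by rw [pprod_M]; exact hprod
  ext i j
  rw [Matrix.add_mul, Matrix.add_apply]
  have hdiag : (Matrix.diagonal d * Bmat M α β d) i j = d i * Bmat M α β d i j := by
    rw [Matrix.diagonal_mul]
  rw [hdiag, Matrix.mul_apply]
  by_cases hi : (i : ℕ) + 1 < M
  · -- not the last row
    set k0 : Fin M := ⟨(i : ℕ) + 1, hi⟩ with hk0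
    have hsum : (∑ k, SmatR M α i k * Bmat M α β d k j) = Bmat M α β d k0 j := by
      rw [Finset.sum_eq_single k0]
      · have : SmatR M α i k0 = 1 := by simp [SmatR, hk0]
        rw [this, one_mul]
      · intro b _ hb
        have hb' : (b : ℕ) ≠ (i : ℕ) + 1 := fun h => hb (Fin.ext h)
        have hi' : (i : ℕ) ≠ M - 1 := by omega
        simp [SmatR, hb', hi']
      · intro h; exact absurd (Finset.mem_univ k0) h
    rw [hsum]
    have hE1 : pprod M d ((i : ℕ) + 1) = pprod M d i * d i := by
      rw [pprod_succ M d i (by omega)]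
    have hk0v : (k0 : ℕ) = (i : ℕ) + 1 := rfl
    simp only [Bmat, Matrix.of_apply, hk0v, Matrix.one_apply]
    have hsgn : (-1 : ℝ) ^ ((i : ℕ) + 1 + (j : ℕ) + 1) = -(-1 : ℝ) ^ ((i : ℕ) + (j : ℕ) + 1) := by
      rw [show (i : ℕ) + 1 + (j : ℕ) + 1 = ((i : ℕ) + (j : ℕ) + 1) + 1 from by omega, pow_succ]
      ring
    rcases lt_trichotomy ((j : ℕ)) ((i : ℕ)) with h | h | h
    · have hij : ¬ (i = j) := fun hh => by rw [hh] at h; exact lt_irrefl _ h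
      rw [if_neg hij, if_pos h, if_pos (by omega : (j : ℕ) < (i : ℕ) + 1), hE1, hsgn]
      ring
    · have hij : i = j := Fin.ext h.symm
      rw [if_pos hij, h, if_neg (lt_irrefl _), if_pos (Nat.lt_succ_self _), hE1]
      have s1 : (-1 : ℝ) ^ ((i : ℕ) + (i : ℕ) + 1) = -1 := Odd.neg_one_pow ⟨(i : ℕ), by omega⟩
      have s2 : (-1 : ℝ) ^ ((i : ℕ) + 1 + (i : ℕ) + 1) = 1 := Even.neg_one_pow ⟨(i : ℕ) + 1, by omega⟩
      rw [s1, s2]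
      have hdi : d i ≠ 0 := ne_of_gt (hd i)
      field_simp
      rw [mul_div_cancel_left₀ _ (hp _)]
      ring
    · have hij : ¬ (i = j) := fun hh => by rw [hh] at h; exact lt_irrefl _ h
      rw [if_neg hij, if_neg (by omega : ¬ (j : ℕ) < (i : ℕ)),
        if_neg (by omega : ¬ (j : ℕ) < (i : ℕ) + 1), hE1, hsgn]
      ring
  · -- last row
    have hiM : (i : ℕ) + 1 = M := by have := i.isLt; omega
    set z : Fin M := ⟨0, by omega⟩ with hz
    have hzv : (z : ℕ) = 0 := rfl
    have hsum : (∑ k, SmatR M α i k * Bmat M α β d k j)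
        = ((-1 : ℝ) ^ M * α) * Bmat M α β d z j := by
      rw [Finset.sum_eq_single z]
      · have h0 : ¬ ((z : ℕ) = (i : ℕ) + 1) := by rw [hzv]; omega
        have hI1 : (i : ℕ) = M - 1 := by omega
        simp [SmatR, h0, hI1, hzv]
      · intro b _ hb
        have hbM := b.isLt
        have hb1 : ¬ ((b : ℕ) = (i : ℕ) + 1) := by omega
        have hb0 : ¬ ((i : ℕ) = M - 1 ∧ (b : ℕ) = 0) := by
          rintro ⟨-, hb0⟩
          exact hb (Fin.ext hb0)
        simp only [SmatR, Matrix.of_apply, if_neg hb1, if_neg hb0, zero_mul]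
      · intro h; exact absurd (Finset.mem_univ z) h
    rw [hsum]
    have hE : pprod M d ((i : ℕ)) * d i = β := by
      have h2 := pprod_succ M d (i : ℕ) (by omega)
      simp only [Fin.eta] at h2
      rw [← h2, hiM, hpM]
    have hp0 : pprod M d 0 = 1 := by simp [pprod]
    simp only [Bmat, Matrix.of_apply, hzv, hp0, Matrix.one_apply]
    by_cases h : (j : ℕ) = (i : ℕ)
    · have hij : i = j := Fin.ext h.symm
      rw [if_pos hij, h, if_neg (lt_irrefl _), if_neg (by omega : ¬ (i : ℕ) < 0),
        show (i : ℕ) + 1 = M from hiM]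
      have s1 : (-1 : ℝ) ^ ((i : ℕ) + (i : ℕ) + 1) = -1 := Odd.neg_one_pow ⟨(i : ℕ), by omega⟩
      rw [show (0 : ℕ) + (i : ℕ) + 1 = M from by omega, s1, hpM]
      have sMM : (-1 : ℝ) ^ M * (-1 : ℝ) ^ M = 1 := by
        rw [← pow_add]; exact Even.neg_one_pow ⟨M, by omega⟩
      have hdi : d i ≠ 0 := ne_of_gt (hd i)
      have e : d i * (-1 * (pprod M d (i : ℕ) / β) * (β / (α - β) + 0)) + (-1 : ℝ) ^ M * α * ((-1) ^ M * (1 / β) * (β / (α - β) + 0))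
          = (α * ((-1 : ℝ) ^ M * (-1) ^ M) - pprod M d (i : ℕ) * d i) / (α - β) := by
        field_simp
        ring
      rw [e, sMM, hE, mul_one, div_self hαβ']
    · have hij : ¬ (i = j) := fun hh => by rw [hh] at h; exact h rfl
      have hjlt : (j : ℕ) < (i : ℕ) := by have := j.isLt; omega
      rw [if_neg hij, if_pos hjlt, if_neg (by omega : ¬ (j : ℕ) < 0),
        show (i : ℕ) + (j : ℕ) + 1 = M + (j : ℕ) from by omega,
        show (0 : ℕ) + (j : ℕ) + 1 = (j : ℕ) + 1 from by omega]
      have hMJ : (-1 : ℝ) ^ M * (-1 : ℝ) ^ ((j : ℕ) + 1) = -(-1 : ℝ) ^ (M + (j : ℕ)) := by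
        rw [← pow_add, show M + ((j : ℕ) + 1) = (M + (j : ℕ)) + 1 from by omega, pow_succ]
        ring
      have hpj := hp ((j : ℕ) + 1)
      have e : d i * ((-1 : ℝ) ^ (M + (j : ℕ)) * (pprod M d (i : ℕ) / pprod M d ((j : ℕ) + 1)) * (β / (α - β) + 1)) +
          (-1) ^ M * α * ((-1) ^ ((j : ℕ) + 1) * (1 / pprod M d ((j : ℕ) + 1)) * (β / (α - β) + 0))
          = ((-1 : ℝ) ^ (M + (j : ℕ)) * (pprod M d (i : ℕ) * d i) + (-1) ^ M * (-1) ^ ((j : ℕ) + 1) * β) * α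
            / ((α - β) * pprod M d ((j : ℕ) + 1)) := by
        field_simp
        ring
      rw [e, hE, hMJ]
      ring

noncomputable def Pm (M : ℕ) : Matrix (Fin M) (Fin M) ℝ :=
  Matrix.diagonal fun k : Fin M => (-1 : ℝ) ^ (k : ℕ)

lemma PmPm (M : ℕ) : Pm M * Pm M = 1 := by
  rw [Pm, Matrix.diagonal_mul_diagonal]
  have : (fun k : Fin M => (-1 : ℝ) ^ (k : ℕ) * (-1 : ℝ) ^ (k : ℕ)) = fun _ => (1 : ℝ) := by
    funext k
    rw [← pow_add]
    exact Even.neg_one_pow ⟨(k : ℕ), rfl⟩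
  rw [this, Matrix.diagonal_one]

lemma single_factor (M : ℕ) (hM : 1 ≤ M) (α β : ℝ) (hβ : 0 < β) (hαβ : β < α)
    (d : Fin M → ℝ) (hd : ∀ m, 0 < d m) (hprod : ∏ m, d m = β) :
    IsUnit (Matrix.diagonal d + SmatR M α) ∧
      ∀ i j : Fin M,
        0 < (-1 : ℝ) * (Pm M * (Matrix.diagonal d + SmatR M α)⁻¹ * Pm M) i j := by
  have hAB := AB_eq_one M hM α β hβ hαβ d hd hprod
  have hBA : Bmat M α β d * (Matrix.diagonal d + SmatR M α) = 1 :=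
    mul_eq_one_comm.mp hAB
  have hinv : (Matrix.diagonal d + SmatR M α)⁻¹ = Bmat M α β d :=
    Matrix.inv_eq_right_inv hAB
  refine ⟨⟨⟨_, Bmat M α β d, hAB, hBA⟩, rfl⟩, ?_⟩
  intro i j
  rw [hinv]
  have hval : (Pm M * Bmat M α β d * Pm M) i j
      = (-1 : ℝ) ^ (i : ℕ) * Bmat M α β d i j * (-1 : ℝ) ^ (j : ℕ) := by
    rw [Pm, Matrix.mul_diagonal, Matrix.diagonal_mul]
  rw [hval]
  have hsq : (-1 : ℝ) ^ ((i : ℕ) + (j : ℕ) + 1) * (-1 : ℝ) ^ ((i : ℕ) + (j : ℕ) + 1) = 1 := by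
    rw [← pow_add]
    exact Even.neg_one_pow ⟨(i : ℕ) + (j : ℕ) + 1, rfl⟩
  have hB : Bmat M α β d i j = (-1 : ℝ) ^ ((i : ℕ) + (j : ℕ) + 1) *
      (pprod M d i / pprod M d ((j : ℕ) + 1)) *
      (β / (α - β) + if (j : ℕ) < (i : ℕ) then 1 else 0) := rfl
  rw [hB]
  have key : (-1 : ℝ) * ((-1 : ℝ) ^ (i : ℕ) *
      ((-1 : ℝ) ^ ((i : ℕ) + (j : ℕ) + 1) *
        (pprod M d i / pprod M d ((j : ℕ) + 1)) *
        (β / (α - β) + if (j : ℕ) < (i : ℕ) then 1 else 0)) * (-1 : ℝ) ^ (j : ℕ))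
      = ((-1 : ℝ) ^ ((i : ℕ) + (j : ℕ) + 1) * (-1 : ℝ) ^ ((i : ℕ) + (j : ℕ) + 1)) *
        ((pprod M d i / pprod M d ((j : ℕ) + 1)) *
          (β / (α - β) + if (j : ℕ) < (i : ℕ) then 1 else 0)) := by
    ring
  rw [key, hsq, one_mul]
  have hc : 0 < β / (α - β) := div_pos hβ (by linarith)
  have hr : 0 < pprod M d i / pprod M d ((j : ℕ) + 1) :=
    div_pos (pprod_pos M d hd _) (pprod_pos M d hd _)
  apply mul_pos hr
  split
  · linarith
  · linarith

lemma list_prod_pos (M : ℕ) (hM : 1 ≤ M) (L : List (Matrix (Fin M) (Fin M) ℝ))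
    (hL : L ≠ [])
    (h : ∀ A ∈ L, IsUnit A ∧ ∀ i j : Fin M, 0 < (-1 : ℝ) * (Pm M * A⁻¹ * Pm M) i j) :
    IsUnit L.prod ∧
      ∀ i j : Fin M, 0 < (-1 : ℝ) ^ L.length * (Pm M * (L.prod)⁻¹ * Pm M) i j := by
  induction L with
  | nil => exact absurd rfl hL
  | cons A T ih =>
    have hA := h A (List.mem_cons_self)
    rcases T with _ | ⟨B, T'⟩
    · simp only [List.prod_cons, List.prod_nil, mul_one, List.length_cons, List.length_nil,
        zero_add, pow_one]
      exact hA
    · have hT := ih (by simp) (fun C hC => h C (List.mem_cons_of_mem A hC))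
      constructor
      · rw [List.prod_cons]
        exact hA.1.mul hT.1
      · intro i j
        rw [List.prod_cons, Matrix.mul_inv_rev]
        have hPP : Pm M * ((B :: T').prod⁻¹ * A⁻¹) * Pm M
            = (Pm M * (B :: T').prod⁻¹ * Pm M) * (Pm M * A⁻¹ * Pm M) := by
          have : (Pm M * (B :: T').prod⁻¹ * Pm M) * (Pm M * A⁻¹ * Pm M)
              = Pm M * (B :: T').prod⁻¹ * (Pm M * Pm M) * A⁻¹ * Pm M := by
            noncomm_ring
          rw [this, PmPm, mul_one]
          noncomm_ring
        rw [hPP]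
        have hlen : (A :: B :: T').length = (B :: T').length + 1 := rfl
        rw [hlen]
        have hexp : (-1 : ℝ) ^ ((B :: T').length + 1) *
            ((Pm M * (B :: T').prod⁻¹ * Pm M) * (Pm M * A⁻¹ * Pm M)) i j
            = ∑ k, ((-1 : ℝ) ^ (B :: T').length * (Pm M * (B :: T').prod⁻¹ * Pm M) i k) *
                ((-1 : ℝ) * (Pm M * A⁻¹ * Pm M) k j) := by
          rw [Matrix.mul_apply, Finset.mul_sum]
          apply Finset.sum_congr rfl
          intro k _
          rw [pow_succ]
          ring
        rw [hexp]
        have : Nonempty (Fin M) := ⟨⟨0, hM⟩⟩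
        exact Finset.sum_pos (fun k _ => mul_pos (hT.2 i k) (hA.2 k j)) Finset.univ_nonempty

/-- for positive data with row products `β` and `α > β > 0`, the matrix
`X_α` is invertible and `(−1)^N P X_α⁻¹ P` has all entries strictly positive, where
`P = diag(1,−1,1,…)`. -/
theorem Xalpha_inverse_positive (M N : ℕ) (hM : 1 ≤ M) (hN : 1 ≤ N)
    (β α : ℝ) (hβ : 0 < β) (hαβ : β < α)
    (V : ℕ → Fin M → ℝ)
    (hVpos : ∀ n, 1 ≤ n → n ≤ N → ∀ m, 0 < V n m)
    (hVβ : ∀ n, 1 ≤ n → n ≤ N → ∏ m, V n m = β)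
    (Xα : Matrix (Fin M) (Fin M) ℝ)
    (hXα : Xα = (((List.range N).map fun k =>
        Matrix.diagonal (V (N - k)) + SmatR M α).prod)) :
    IsUnit Xα ∧
    ∀ i j : Fin M,
      0 < (-1 : ℝ) ^ N *
        (Matrix.diagonal (fun k : Fin M => (-1 : ℝ) ^ (k : ℕ)) * Xα⁻¹ *
          Matrix.diagonal (fun k : Fin M => (-1 : ℝ) ^ (k : ℕ))) i j := by
  set L : List (Matrix (Fin M) (Fin M) ℝ) :=
    (List.range N).map (fun k => Matrix.diagonal (V (N - k)) + SmatR M α) with hL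
  have hmem : ∀ A ∈ L, IsUnit A ∧ ∀ i j : Fin M,
      0 < (-1 : ℝ) * (Pm M * A⁻¹ * Pm M) i j := by
    intro A hA
    rw [hL, List.mem_map] at hA
    obtain ⟨k, hk, rfl⟩ := hA
    rw [List.mem_range] at hk
    exact single_factor M hM α β hβ hαβ (V (N - k))
      (hVpos _ (by omega) (by omega)) (hVβ _ (by omega) (by omega))
  have hne : L ≠ [] := by
    rw [hL]
    simp only [ne_eq, List.map_eq_nil_iff, List.range_eq_nil]
    omega
  have main := list_prod_pos M hM L hne hmem
  have hlen : L.length = N := by rw [hL, List.length_map, List.length_range]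
  rw [hXα]
  refine ⟨main.1, fun i j => ?_⟩
  have := main.2 i j
  rw [hlen] at this
  exact this
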